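/- Let (X,d,m) be a metric measure space, p ∈ (1,∞), and let D be a pointwise local D-structure on (X,d,m). Let u, v ∈ S^p(X) and let B ⊆ X be a Borel set such that u = v m-a.e. on B. Then the minimal pseudo-gradients satisfy D(u − v) = 0 m-a.e. on B and Du = Dv m-a.e. on B. -/

import Mathlib

open Filter Set
open scoped ENNReal NNReal Topology

noncomputable section

namespace AxSob

variable {X : Type*} [MetricSpace X] [MeasurableSpace X]

/-- The quantity `∫_B |u|^p dm`. -/
def lpIntOn (m : MeasureTheory.Measure X) (p : ℝ) (u : X → ℝ) (B : Set X) : ℝ≥0∞ :=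
  ∫⁻ x in B, ENNReal.ofReal |u x| ^ p ∂m

/-- `u` belongs to `L^p(m)`. -/
def LpMem (m : MeasureTheory.Measure X) (p : ℝ) (u : X → ℝ) : Prop :=
  Measurable u ∧ lpIntOn m p u Set.univ < ∞

/-- `u` belongs to `L^p_loc(m)`: it is Borel and `p`-integrable on every bounded Borel set. -/
def LpLocMem (m : MeasureTheory.Measure X) (p : ℝ) (u : X → ℝ) : Prop :=
  Measurable u ∧ ∀ B : Set X, MeasurableSet B → Bornology.IsBounded B → lpIntOn m p u B < ∞

/-- Convergence in `L^p(m)`. -/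
def LpTendsto (m : MeasureTheory.Measure X) (p : ℝ) (g : ℕ → X → ℝ) (g₀ : X → ℝ) : Prop :=
  Tendsto (fun n => lpIntOn m p (fun x => g n x - g₀ x) Set.univ) atTop (𝓝 0)

/-- Convergence in `L^p_loc(m)`. -/
def LpLocTendsto (m : MeasureTheory.Measure X) (p : ℝ) (u : ℕ → X → ℝ) (u₀ : X → ℝ) : Prop :=
  ∀ B : Set X, MeasurableSet B → Bornology.IsBounded B →
    Tendsto (fun n => lpIntOn m p (fun x => u n x - u₀ x) B) atTop (𝓝 0)

/-- `u` belongs to `L^∞(m)`. -/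
def LinfMem (m : MeasureTheory.Measure X) (u : X → ℝ) : Prop :=
  Measurable u ∧ ∃ C : ℝ, ∀ᵐ x ∂m, |u x| ≤ C

/-- A `D`-structure (à la Gol'dshtein–Troyanov) on a metric measure space `(X, d, m)`,
with exponent `p`.  To every function `u` (thought of as an element of `L^p_loc(m)`) it
associates the family `D u` of its pseudo-gradients: non-negative Borel functions,
considered up to `m`-a.e. equality, satisfying the axioms A1–A5. -/
structure DStructure (X : Type*) [MetricSpace X] [MeasurableSpace X]
    (m : MeasureTheory.Measure X) (p : ℝ) where
  D : (X → ℝ) → Set (X → ℝ)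
  measurable_of_mem : ∀ u g, g ∈ D u → Measurable g
  nonneg_of_mem : ∀ u g, g ∈ D u → 0 ≤ g
  /-- `D` is defined on `L^p_loc(m)`, i.e. on `m`-a.e. equivalence classes. -/
  congr_ae : ∀ u v : X → ℝ, u =ᵐ[m] v → D u = D v
  /-- pseudo-gradients are considered up to `m`-a.e. equality. -/
  mem_congr_ae : ∀ u g h : X → ℝ, g ∈ D u → g =ᵐ[m] h → Measurable h → 0 ≤ h → h ∈ D u
  /-- A1 (non triviality). -/
  axiomA1 : ∀ (u : X → ℝ) (K : ℝ≥0), LpLocMem m p u → 0 ≤ u → LipschitzWith K u →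
    {x | 0 < u x}.indicator (fun _ => (K : ℝ)) ∈ D u
  /-- A2 (upper linearity). -/
  axiomA2 : ∀ (u₁ u₂ g₁ g₂ g : X → ℝ) (α₁ α₂ : ℝ),
    LpLocMem m p u₁ → LpLocMem m p u₂ → g₁ ∈ D u₁ → g₂ ∈ D u₂ →
    Measurable g → 0 ≤ g → (∀ᵐ x ∂m, |α₁| * g₁ x + |α₂| * g₂ x ≤ g x) →
    g ∈ D (fun x => α₁ * u₁ x + α₂ * u₂ x)
  /-- A3 (Leibniz rule). -/
  axiomA3 : ∀ (u g φ : X → ℝ) (K : ℝ≥0) (M : ℝ),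
    LpLocMem m p u → g ∈ D u → LipschitzWith K φ → (∀ x, |φ x| ≤ M) →
    (fun x => g x * M + (K : ℝ) * |u x|) ∈ D (fun x => φ x * u x)
  /-- A4 (lattice property). -/
  axiomA4 : ∀ u₁ u₂ g₁ g₂ : X → ℝ,
    LpLocMem m p u₁ → LpLocMem m p u₂ → g₁ ∈ D u₁ → g₂ ∈ D u₂ →
    (fun x => max (g₁ x) (g₂ x)) ∈ D (fun x => max (u₁ x) (u₂ x)) ∧
    (fun x => max (g₁ x) (g₂ x)) ∈ D (fun x => min (u₁ x) (u₂ x))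
  /-- A5 (completeness). -/
  axiomA5 : ∀ (u g : ℕ → X → ℝ) (u₀ g₀ : X → ℝ),
    (∀ n, LpLocMem m p (u n)) → (∀ n, g n ∈ D (u n)) → (∀ n, LpMem m p (g n)) →
    LpLocMem m p u₀ → Measurable g₀ → 0 ≤ g₀ →
    LpLocTendsto m p u u₀ → LpTendsto m p g g₀ → g₀ ∈ D u₀

namespace DStructure

variable {m : MeasureTheory.Measure X} {p : ℝ}

/-- The `p`-Dirichlet energy `E_p(u|B) = inf { ∫_B g^p dm : g ∈ D[u] }`. -/
def energyOn (S : DStructure X m p) (u : X → ℝ) (B : Set X) : ℝ≥0∞ :=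
  ⨅ (g : X → ℝ) (_ : g ∈ S.D u), lpIntOn m p g B

/-- The `p`-Dirichlet energy `E_p(u) = E_p(u|X)`. -/
def energy (S : DStructure X m p) (u : X → ℝ) : ℝ≥0∞ := S.energyOn u Set.univ

/-- The Sobolev class `S^p(X) = { u ∈ L^p_loc(m) : E_p(u) < ∞ }`. -/
def SobolevClass (S : DStructure X m p) : Set (X → ℝ) :=
  {u | LpLocMem m p u ∧ S.energy u < ∞}

/-- The Sobolev space `W^{1,p}(X) = L^p(m) ∩ S^p(X)`. -/
def W1p (S : DStructure X m p) : Set (X → ℝ) :=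
  {u | LpMem m p u ∧ S.energy u < ∞}

/-- The Sobolev norm `‖u‖ = (‖u‖_{L^p}^p + E_p(u))^{1/p}`. -/
def wNorm (S : DStructure X m p) (u : X → ℝ) : ℝ≥0∞ :=
  (lpIntOn m p u Set.univ + S.energy u) ^ (1 / p)

/-- `g` is the minimal pseudo-gradient of `u`: `g ∈ D[u] ∩ L^p(m)` and
`∫ g^p dm = E_p(u)`. -/
def IsMinimalPG (S : DStructure X m p) (u g : X → ℝ) : Prop :=
  g ∈ S.D u ∧ LpMem m p g ∧ lpIntOn m p g Set.univ = S.energy u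

/-- Property L1: if `u ∈ S^p(X)` is `m`-a.e. constant on a Borel set `B`, then
`E_p(u|B) = 0`. -/
def L1prop (S : DStructure X m p) : Prop :=
  ∀ u ∈ S.SobolevClass, ∀ B : Set X, MeasurableSet B →
    (∃ c : ℝ, ∀ᵐ x ∂(m.restrict B), u x = c) → S.energyOn u B = 0

/-- Property L2: if `u ∈ S^p(X)` is `m`-a.e. constant on a Borel set `B`, then the
minimal pseudo-gradient vanishes `m`-a.e. on `B`. -/
def L2prop (S : DStructure X m p) : Prop :=
  ∀ u ∈ S.SobolevClass, ∀ B : Set X, MeasurableSet B →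
    (∃ c : ℝ, ∀ᵐ x ∂(m.restrict B), u x = c) →
    ∀ g, S.IsMinimalPG u g → ∀ᵐ x ∂(m.restrict B), g x = 0

/-- Property L3: if `u ∈ S^p(X)` and `g ∈ D[u]`, then `χ_{u>0}·g ∈ D[u⁺]`. -/
def L3prop (S : DStructure X m p) : Prop :=
  ∀ u ∈ S.SobolevClass, ∀ g ∈ S.D u,
    {x | 0 < u x}.indicator g ∈ S.D (fun x => max (u x) 0)

/-- Property L4: if `u ∈ S^p(X)` and `g₁, g₂ ∈ D[u]`, then `min{g₁,g₂} ∈ D[u]`. -/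
def L4prop (S : DStructure X m p) : Prop :=
  ∀ u ∈ S.SobolevClass, ∀ g₁ ∈ S.D u, ∀ g₂ ∈ S.D u,
    (fun x => min (g₁ x) (g₂ x)) ∈ S.D u

/-- Property L5: the minimal pseudo-gradient satisfies `Du ≤ g` `m`-a.e. for every
`g ∈ D[u]`. -/
def L5prop (S : DStructure X m p) : Prop :=
  ∀ u ∈ S.SobolevClass, ∀ g, S.IsMinimalPG u g →
    ∀ h ∈ S.D u, ∀ᵐ x ∂m, g x ≤ h x

/-- A pointwise local `D`-structure: it satisfies L1 and L5. -/
def PointwiseLocal (S : DStructure X m p) : Prop := S.L1prop ∧ S.L5prop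

/-- Strong locality in the sense of Shanmugalingam. -/
def ShanmugalingamLocal (S : DStructure X m p) : Prop :=
  ∀ u₁ ∈ S.SobolevClass, ∀ u₂ ∈ S.SobolevClass, ∀ B : Set X, MeasurableSet B →
    (∀ᵐ x ∂(m.restrict B), u₁ x = u₂ x) →
    ∀ g₁ ∈ S.D u₁, ∀ g₂ ∈ S.D u₂,
      (fun x => B.indicator g₁ x + Bᶜ.indicator g₂ x) ∈ S.D u₂

/-- Strong locality in the sense of Timoshin. -/
def TimoshinLocal (S : DStructure X m p) : Prop :=
  ∀ u₁ ∈ S.SobolevClass, ∀ u₂ ∈ S.SobolevClass,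
    ∀ g₁ ∈ S.D u₁, ∀ g₂ ∈ S.D u₂,
      (fun x => {y | u₁ y < u₂ y}.indicator g₁ x + {y | u₂ y < u₁ y}.indicator g₂ x +
        {y | u₁ y = u₂ y}.indicator (fun y => min (g₁ y) (g₂ y)) x)
        ∈ S.D (fun x => min (u₁ x) (u₂ x))

end DStructure

end AxSob

open AxSob AxSob.DStructure

section AuxProof
open MeasureTheory

variable {X : Type*} [MetricSpace X] [MeasurableSpace X] {m : MeasureTheory.Measure X} {p : ℝ}

lemma aux_rpow_add_le (hp : 0 ≤ p) (a b : ℝ≥0∞) : (a + b) ^ p ≤ 2 ^ p * (a ^ p + b ^ p) := by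
  calc (a + b) ^ p ≤ (2 * max a b) ^ p := by
        apply ENNReal.rpow_le_rpow _ hp
        rw [two_mul]
        exact add_le_add (le_max_left a b) (le_max_right a b)
    _ = 2 ^ p * (max a b) ^ p := ENNReal.mul_rpow_of_nonneg _ _ hp
    _ ≤ 2 ^ p * (a ^ p + b ^ p) := by
        apply mul_le_mul_right
        rcases max_cases a b with ⟨h, _⟩ | ⟨h, _⟩ <;> rw [h]
        · exact le_self_add
        · exact le_add_self

lemma aux_lpIntOn_le (hp : 0 ≤ p) {h f g : X → ℝ} (hf : Measurable f)
    (hb : ∀ x, |h x| ≤ |f x| + |g x|) (s : Set X) :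
    lpIntOn m p h s ≤ (2 : ℝ≥0∞) ^ p * (lpIntOn m p f s + lpIntOn m p g s) := by
  unfold lpIntOn
  have key : ∀ x, ENNReal.ofReal |h x| ^ p ≤
      2 ^ p * (ENNReal.ofReal |f x| ^ p + ENNReal.ofReal |g x| ^ p) := by
    intro x
    calc ENNReal.ofReal |h x| ^ p
        ≤ (ENNReal.ofReal |f x| + ENNReal.ofReal |g x|) ^ p := by
          apply ENNReal.rpow_le_rpow _ hp
          rw [← ENNReal.ofReal_add (abs_nonneg _) (abs_nonneg _)]
          exact ENNReal.ofReal_le_ofReal (hb x)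
      _ ≤ _ := aux_rpow_add_le hp _ _
  calc ∫⁻ x in s, ENNReal.ofReal |h x| ^ p ∂m
      ≤ ∫⁻ x in s, 2 ^ p * (ENNReal.ofReal |f x| ^ p + ENNReal.ofReal |g x| ^ p) ∂m :=
        lintegral_mono key
    _ = 2 ^ p * ∫⁻ x in s, (ENNReal.ofReal |f x| ^ p + ENNReal.ofReal |g x| ^ p) ∂m :=
        lintegral_const_mul' _ _ (ENNReal.rpow_ne_top_of_nonneg hp (by norm_num))
    _ = 2 ^ p * ((∫⁻ x in s, ENNReal.ofReal |f x| ^ p ∂m)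
          + ∫⁻ x in s, ENNReal.ofReal |g x| ^ p ∂m) := by
        rw [lintegral_add_left ((hf.abs.ennreal_ofReal).pow_const p)]

lemma aux_lpLocMem_sub (hp : 0 ≤ p) {u v : X → ℝ} (hu : LpLocMem m p u) (hv : LpLocMem m p v) :
    LpLocMem m p (fun x => u x - v x) := by
  refine ⟨hu.1.sub hv.1, fun B hB hBb => ?_⟩
  calc lpIntOn m p (fun x => u x - v x) B ≤ (2 : ℝ≥0∞) ^ p * (lpIntOn m p u B + lpIntOn m p v B) :=
        aux_lpIntOn_le hp hu.1 (fun x => abs_sub (u x) (v x)) B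
    _ < ∞ := ENNReal.mul_lt_top (ENNReal.rpow_lt_top_of_nonneg hp (by norm_num))
        (ENNReal.add_lt_top.mpr ⟨hu.2 B hB hBb, hv.2 B hB hBb⟩)

end AuxProof
open AxSob AxSob.DStructure

/-- For a pointwise local D-structure: if u, v in the Sobolev class coincide m-a.e. on
a Borel set B, then the minimal pseudo-gradient of u - v vanishes m-a.e. on B and the
minimal pseudo-gradients of u and of v coincide m-a.e. on B. -/
theorem minimalPG_locality {X : Type*} [MetricSpace X] [CompleteSpace X]
    [TopologicalSpace.SeparableSpace X] [MeasurableSpace X] [BorelSpace X]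
    (m : MeasureTheory.Measure X) (hm : m ≠ 0)
    (hball : ∀ (x : X) (r : ℝ), m (Metric.ball x r) < ∞)
    (p : ℝ) (hp : 1 < p) (S : DStructure X m p)
    (hloc : S.PointwiseLocal)
    (u v : X → ℝ) (hu : u ∈ S.SobolevClass) (hv : v ∈ S.SobolevClass)
    (B : Set X) (hB : MeasurableSet B) (huv : ∀ᵐ x ∂(m.restrict B), u x = v x)
    (guv gu gv : X → ℝ)
    (hguv : S.IsMinimalPG (fun x => u x - v x) guv)
    (hgu : S.IsMinimalPG u gu) (hgv : S.IsMinimalPG v gv) :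
    (∀ᵐ x ∂(m.restrict B), guv x = 0) ∧ (∀ᵐ x ∂(m.restrict B), gu x = gv x) := by

  have hp0 : (0:ℝ) ≤ p := zero_le_one.trans hp.le
  have hppos : (0:ℝ) < p := lt_trans one_pos hp
  obtain ⟨hguvD, hguvLp, hguvE⟩ := hguv
  obtain ⟨hguD, hguLp, hguE⟩ := hgu
  obtain ⟨hgvD, hgvLp, hgvE⟩ := hgv
  have hguv0 : 0 ≤ guv := S.nonneg_of_mem _ _ hguvD
  have hgu0 : 0 ≤ gu := S.nonneg_of_mem _ _ hguD
  have hgv0 : 0 ≤ gv := S.nonneg_of_mem _ _ hgvD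
  -- `gu + gv` is a pseudo-gradient of `u - v`
  have hsum : (fun x => gu x + gv x) ∈ S.D (fun x => u x - v x) := by
    have h := S.axiomA2 u v gu gv (fun x => gu x + gv x) 1 (-1) hu.1 hv.1 hguD hgvD
      (hguLp.1.add hgvLp.1) (fun x => add_nonneg (hgu0 x) (hgv0 x))
      (MeasureTheory.ae_of_all m fun x => by simp)
    rwa [S.congr_ae (fun x => (1:ℝ) * u x + (-1) * v x) (fun x => u x - v x)
      (MeasureTheory.ae_of_all m fun x => by ring)] at h
  -- `u - v` is in the Sobolev class
  have hSub : (fun x => u x - v x) ∈ S.SobolevClass := by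
    refine ⟨aux_lpLocMem_sub hp0 hu.1 hv.1, ?_⟩
    have h1 : S.energy (fun x => u x - v x) ≤ lpIntOn m p (fun x => gu x + gv x) Set.univ :=
      iInf₂_le _ hsum
    have h2 : lpIntOn m p (fun x => gu x + gv x) Set.univ
        ≤ (2:ℝ≥0∞) ^ p * (lpIntOn m p gu Set.univ + lpIntOn m p gv Set.univ) :=
      aux_lpIntOn_le hp0 hguLp.1 (fun x => abs_add_le _ _) _
    exact lt_of_le_of_lt (h1.trans h2)
      (ENNReal.mul_lt_top (ENNReal.rpow_lt_top_of_nonneg hp0 (by norm_num))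
        (ENNReal.add_lt_top.mpr ⟨hguLp.2, hgvLp.2⟩))
  -- the energy of `u - v` on `B` vanishes (property L1)
  have hE0 : S.energyOn (fun x => u x - v x) B = 0 := by
    apply hloc.1 _ hSub B hB
    exact ⟨0, by filter_upwards [huv] with x hx; simp [hx]⟩
  -- hence the integral of `guv ^ p` over `B` vanishes (using L5)
  have hInt0 : lpIntOn m p guv B = 0 := by
    refine le_antisymm ?_ (zero_le)
    rw [← hE0]
    refine le_iInf₂ fun g hg => ?_
    have h5 : ∀ᵐ x ∂m, guv x ≤ g x := hloc.2 _ hSub guv ⟨hguvD, hguvLp, hguvE⟩ g hg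
    refine MeasureTheory.lintegral_mono_ae ?_
    filter_upwards [MeasureTheory.ae_restrict_of_ae h5] with x hx
    apply ENNReal.rpow_le_rpow _ hp0
    apply ENNReal.ofReal_le_ofReal
    rw [abs_of_nonneg (hguv0 x)]
    exact hx.trans (le_abs_self _)
  have part1 : ∀ᵐ x ∂(m.restrict B), guv x = 0 := by
    have hmeas : Measurable fun x => ENNReal.ofReal |guv x| ^ p :=
      (hguvLp.1.abs.ennreal_ofReal).pow_const p
    have h0 := (MeasureTheory.lintegral_eq_zero_iff hmeas).mp hInt0
    filter_upwards [h0] with x hx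
    simp only [Pi.zero_apply] at hx
    rcases ENNReal.rpow_eq_zero_iff.mp hx with ⟨h0', _⟩ | ⟨htop, _⟩
    · exact abs_nonpos_iff.mp (ENNReal.ofReal_eq_zero.mp h0')
    · exact absurd htop ENNReal.ofReal_ne_top
  -- the zero function admits a pseudo-gradient
  have hzLoc : LpLocMem m p (fun _ : X => (0:ℝ)) := by
    refine ⟨measurable_const, fun C hC hCb => ?_⟩
    simp [lpIntOn, ENNReal.zero_rpow_of_pos hppos]
  have hz := S.axiomA1 (fun _ => (0:ℝ)) 0 hzLoc le_rfl (LipschitzWith.const (0:ℝ))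
  -- `guv` is a pseudo-gradient of `v - u`
  have hguvVU : guv ∈ S.D (fun x => v x - u x) := by
    have h := S.axiomA2 (fun x => u x - v x) (fun _ => (0:ℝ)) guv _ guv (-1) 0
      hSub.1 hzLoc hguvD hz hguvLp.1 hguv0
      (MeasureTheory.ae_of_all m fun x => by simp)
    rwa [S.congr_ae (fun x => (-1:ℝ) * (u x - v x) + 0 * (0:ℝ)) (fun x => v x - u x)
      (MeasureTheory.ae_of_all m fun x => by ring)] at h
  -- `gv + guv ∈ D[u]` and `gu + guv ∈ D[v]`
  have hDu : (fun x => gv x + guv x) ∈ S.D u := by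
    have h := S.axiomA2 v (fun x => u x - v x) gv guv (fun x => gv x + guv x) 1 1
      hv.1 hSub.1 hgvD hguvD (hgvLp.1.add hguvLp.1)
      (fun x => add_nonneg (hgv0 x) (hguv0 x))
      (MeasureTheory.ae_of_all m fun x => by simp)
    rwa [S.congr_ae (fun x => (1:ℝ) * v x + 1 * (u x - v x)) u
      (MeasureTheory.ae_of_all m fun x => by ring)] at h
  have hDv : (fun x => gu x + guv x) ∈ S.D v := by
    have h := S.axiomA2 u (fun x => v x - u x) gu guv (fun x => gu x + guv x) 1 1
      hu.1 (aux_lpLocMem_sub hp0 hv.1 hu.1) hguD hguvVU (hguLp.1.add hguvLp.1)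
      (fun x => add_nonneg (hgu0 x) (hguv0 x))
      (MeasureTheory.ae_of_all m fun x => by simp)
    rwa [S.congr_ae (fun x => (1:ℝ) * u x + 1 * (v x - u x)) v
      (MeasureTheory.ae_of_all m fun x => by ring)] at h
  -- pointwise minimality (property L5)
  have h1 : ∀ᵐ x ∂m, gu x ≤ gv x + guv x := hloc.2 u hu gu ⟨hguD, hguLp, hguE⟩ _ hDu
  have h2 : ∀ᵐ x ∂m, gv x ≤ gu x + guv x := hloc.2 v hv gv ⟨hgvD, hgvLp, hgvE⟩ _ hDv
  refine ⟨part1, ?_⟩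
  filter_upwards [part1, MeasureTheory.ae_restrict_of_ae h1,
    MeasureTheory.ae_restrict_of_ae h2] with x hx0 hx1 hx2
  rw [hx0] at hx1 hx2
  linarith
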